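/- On ℝ² with coordinates (x̄,ā) define the vector fields X̄₁ = (0,2), X̄₂(x̄,ā) = (−x̄, ā), X̄₃(x̄,ā) = (1 − x̄ā, ā²/2), and the functions h₁(x̄,ā) = −x̄, h₂(x̄,ā) = −x̄ā/2, h₃(x̄,ā) = ā/2 − x̄ā²/4. Then for each α ∈ {1,2,3} and every (x̄,ā) ∈ ℝ², the components of X̄α satisfy X̄α¹ = 2 ∂hα/∂ā and X̄α² = −2 ∂hα/∂x̄; that is, each X̄α is the Hamiltonian vector field of hα with respect to the symplectic form Θ̄ = (1/2) dx̄ ∧ dā (equivalently ι_{X̄α}Θ̄ = dhα), so the reduced Schwarz system is a Lie–Hamilton system. -/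

import Mathlib

/-- The reduced vector fields X̄₁, X̄₂, X̄₃ on ℝ² with coordinates (x̄,ā). -/
noncomputable def schXbar : Fin 3 → (Fin 2 → ℝ) → (Fin 2 → ℝ) :=
  ![fun _ => ![0, 2],
    fun q => ![-q 0, q 1],
    fun q => ![1 - q 0 * q 1, (q 1) ^ 2 / 2]]

/-- The Hamiltonian functions h₁, h₂, h₃ on ℝ² with coordinates (x̄,ā). -/
noncomputable def schH : Fin 3 → (Fin 2 → ℝ) → ℝ :=
  ![fun q => -q 0,
    fun q => -(q 0 * q 1) / 2,
    fun q => q 1 / 2 - q 0 * (q 1) ^ 2 / 4]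

open ContinuousLinearMap in
lemma schwarz_hproj (i : Fin 2) (q : Fin 2 → ℝ) :
    HasFDerivAt (fun q : Fin 2 → ℝ => q i) (proj i : (Fin 2 → ℝ) →L[ℝ] ℝ) q := by
  exact (proj (R := ℝ) (φ := fun _ : Fin 2 => ℝ) i).hasFDerivAt

lemma schwarz_fd0 (i : Fin 2) (q v : Fin 2 → ℝ) :
    fderiv ℝ (fun q : Fin 2 → ℝ => q i) q v = v i := by
  rw [(schwarz_hproj i q).fderiv]; rfl

lemma schwarz_fd1 (q v : Fin 2 → ℝ) :
    fderiv ℝ (fun q : Fin 2 → ℝ => -q 0) q v = -v 0 := by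
  rw [HasFDerivAt.fderiv (f := fun q : Fin 2 → ℝ => -q 0) (schwarz_hproj 0 q).neg]; simp

lemma schwarz_fd2 (q v : Fin 2 → ℝ) :
    fderiv ℝ (fun q : Fin 2 → ℝ => -(q 0 * q 1) / 2) q v
      = -(v 0 * q 1 + q 0 * v 1) / 2 := by
  have he : (fun q : Fin 2 → ℝ => -(q 0 * q 1) / 2)
      = fun q : Fin 2 → ℝ => (-(1:ℝ)/2) * (q 0 * q 1) := by funext q; ring
  rw [he, HasFDerivAt.fderiv (f := fun q : Fin 2 → ℝ => (-(1:ℝ)/2) * (q 0 * q 1))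
      (((schwarz_hproj 0 q).mul (schwarz_hproj 1 q)).const_mul (-(1:ℝ)/2))]
  simp; ring

lemma schwarz_fd3 (q v : Fin 2 → ℝ) :
    fderiv ℝ (fun q : Fin 2 → ℝ => q 1 / 2 - q 0 * (q 1) ^ 2 / 4) q v
      = v 1 / 2 - (v 0 * (q 1) ^ 2 + 2 * q 0 * q 1 * v 1) / 4 := by
  have he : (fun q : Fin 2 → ℝ => q 1 / 2 - q 0 * (q 1) ^ 2 / 4)
      = fun q : Fin 2 → ℝ => ((1:ℝ)/2) * q 1 - ((1:ℝ)/4) * (q 0 * (q 1 * q 1)) := by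
    funext q; ring
  rw [he, HasFDerivAt.fderiv (f := fun q : Fin 2 → ℝ =>
          ((1:ℝ)/2) * q 1 - ((1:ℝ)/4) * (q 0 * (q 1 * q 1))) ((((schwarz_hproj 1 q).const_mul ((1:ℝ)/2)).sub
      (((schwarz_hproj 0 q).mul ((schwarz_hproj 1 q).mul (schwarz_hproj 1 q))).const_mul
        ((1:ℝ)/4))))]
  simp; ring

/-- Each X̄α is the Hamiltonian vector field of hα with respect to the
symplectic form Θ̄ = (1/2) dx̄ ∧ dā: in coordinates, X̄α¹ = 2 ∂hα/∂ā and
X̄α² = −2 ∂hα/∂x̄; the reduced Schwarz system is a Lie–Hamilton system. -/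
theorem schwarz_reduced_hamiltonian :
    ∀ (α : Fin 3) (q : Fin 2 → ℝ),
      schXbar α q 0 = 2 * fderiv ℝ (schH α) q (Pi.single 1 1) ∧
      schXbar α q 1 = -2 * fderiv ℝ (schH α) q (Pi.single 0 1) := by
  intro α q
  fin_cases α <;>
    constructor <;>
    simp [schXbar, schH, schwarz_fd0, schwarz_fd1, schwarz_fd2, schwarz_fd3,
      Pi.single_eq_same, Pi.single_eq_of_ne] <;>
    ring
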